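/- Given functions f, g : ℕ → ℕ, define trees T_f and T_g as the prefix-closures of {1^x 0^{f(x)} : x ∈ ℕ} ∪ {1^y : y ∈ ℕ} and similarly for g. Then T_f and T_g are isomorphic as trees if and only if f = g. -/

import Mathlib

/-- `f` is an isomorphism of the subtrees `T` and `S`: a bijection preserving predecessor
(`pred(wa) = w`, `pred(ε) = ε`, realized as `List.dropLast`). -/
def IsTreeIso {α : Type*} (T S : Set (List α)) (f : List α → List α) : Prop :=
  Set.BijOn f T S ∧ ∀ w ∈ T, f w.dropLast = (f w).dropLast

/-- The tree associated to `f : ℕ → ℕ`: the prefix closure of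
`{1^x 0^{f x} : x ∈ ℕ} ∪ {1^y : y ∈ ℕ}`, i.e. all strings `1^x 0^m` with `m ≤ f x`. -/
def funTree (f : ℕ → ℕ) : Set (List (Fin 2)) :=
  {w | ∃ x m, m ≤ f x ∧ w = List.replicate x (1 : Fin 2) ++ List.replicate m (0 : Fin 2)}

namespace FunTreeAux

/-- `1^x 0^m`. -/
def oz (x m : ℕ) : List (Fin 2) := List.replicate x 1 ++ List.replicate m 0

lemma oz_def (x m : ℕ) :
    List.replicate x (1 : Fin 2) ++ List.replicate m (0 : Fin 2) = oz x m := rfl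

lemma oz_length (x m : ℕ) : (oz x m).length = x + m := by simp [oz]

lemma oz_inj {x m x' m' : ℕ} (h : oz x m = oz x' m') : x = x' ∧ m = m' := by
  have h1 := congrArg (List.count (1 : Fin 2)) h
  have h0 := congrArg (List.count (0 : Fin 2)) h
  simp [oz, List.count_append, List.count_replicate] at h1 h0
  exact ⟨h1, h0⟩

lemma oz_mem {f : ℕ → ℕ} {x m : ℕ} (h : m ≤ f x) : oz x m ∈ funTree f := ⟨x, m, h, rfl⟩

lemma take_oz_le {j x : ℕ} (h : j ≤ x) (m : ℕ) : (oz x m).take j = oz j 0 := by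
  rw [oz, List.take_append_of_le_length (by simpa), List.take_replicate]
  simp [oz, Nat.min_eq_left h]

lemma take_oz_ge {j x m : ℕ} (h : x ≤ j) (h2 : j ≤ x + m) : (oz x m).take j = oz x (j - x) := by
  obtain ⟨i, rfl⟩ := Nat.exists_eq_add_of_le h
  rw [oz, show x + i = (List.replicate x (1 : Fin 2)).length + i by simp,
    List.take_append, List.take_replicate]
  simp only [oz, List.length_replicate, Nat.add_sub_cancel_left,
    Nat.min_eq_left (by omega : i ≤ m)]
  rw [List.take_replicate, Nat.min_eq_left (by omega : i ≤ m), Nat.min_eq_right (by omega : x ≤ x + i)]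

lemma dropLast_iterate {α : Type*} (w : List α) (k : ℕ) :
    List.dropLast^[k] w = w.take (w.length - k) := by
  induction k with
  | zero => simp
  | succ k ih =>
    rw [Function.iterate_succ_apply', ih, List.dropLast_eq_take, List.take_take,
      List.length_take]
    congr 1
    omega

lemma dropLast_mem {f : ℕ → ℕ} {w : List (Fin 2)} (h : w ∈ funTree f) :
    w.dropLast ∈ funTree f := by
  obtain ⟨x, m, hm, rfl⟩ := h
  rw [oz_def]
  rcases Nat.eq_zero_or_pos m with rfl | hm'
  · rw [List.dropLast_eq_take, oz_length]
    rcases Nat.eq_zero_or_pos x with rfl | hx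
    · simpa [oz] using oz_mem (f := f) (x := 0) (Nat.zero_le _)
    · rw [show x + 0 - 1 = x - 1 by omega, take_oz_le (by omega)]
      exact oz_mem (Nat.zero_le _)
  · have h1 : (oz x m).dropLast = oz x (m - 1) := by
      rw [List.dropLast_eq_take, oz_length,
        take_oz_ge (show x ≤ x + m - 1 by omega) (show x + m - 1 ≤ x + m by omega)]
      congr 1
      omega
    rw [h1]
    exact oz_mem (by omega)

end FunTreeAux

open FunTreeAux in
/-- `T_f` and `T_g` are isomorphic as trees if and only if `f = g`. -/
theorem funTree_iso_iff (f g : ℕ → ℕ) :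
    (∃ φ, IsTreeIso (funTree f) (funTree g) φ) ↔ f = g := by
  constructor
  · rintro ⟨φ, hbij, hpred⟩
    -- φ commutes with iterated dropLast
    have hiter : ∀ w ∈ funTree f, ∀ k, φ (List.dropLast^[k] w) = List.dropLast^[k] (φ w) := by
      intro w hw k
      induction k with
      | zero => rfl
      | succ k ih =>
        have hmem : List.dropLast^[k] w ∈ funTree f := by
          clear ih; induction k with
          | zero => exact hw
          | succ k ih => rw [Function.iterate_succ_apply']; exact dropLast_mem ih
        rw [Function.iterate_succ_apply', Function.iterate_succ_apply',
          hpred _ hmem, ih]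
    have hnil : φ [] = [] := by
      have h := hpred [] (oz_mem (f := f) (x := 0) (m := 0) (Nat.zero_le _))
      simp only [List.dropLast_nil] at h
      have hl := congrArg List.length h
      rw [List.length_dropLast] at hl
      exact List.eq_nil_of_length_eq_zero (by omega)
    have hnilT : ([] : List (Fin 2)) ∈ funTree f := oz_mem (x := 0) (m := 0) (Nat.zero_le _)
    -- φ preserves length
    have hlen : ∀ w ∈ funTree f, (φ w).length = w.length := by
      have key : ∀ n, ∀ w ∈ funTree f, w.length = n → (φ w).length = w.length := by
        intro n
        induction n with
        | zero => intro w hw hn; rw [List.length_eq_zero_iff] at hn; subst hn; simp [hnil]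
        | succ n ih => ?_
        intro w hw hn
        have hd : w.dropLast ∈ funTree f := dropLast_mem hw
        have hdl : w.dropLast.length = n := by rw [List.length_dropLast, hn]; omega
        have h1 := ih _ hd hdl
        rw [hpred _ hw, hdl] at h1
        have hne : φ w ≠ [] := by
          intro h
          have := hbij.injOn hw hnilT (by rw [h, hnil])
          rw [this] at hn; simp at hn
        rw [List.length_dropLast] at h1
        have : (φ w).length ≠ 0 := by simpa using hne
        omega
      exact fun w hw => key w.length w hw rfl
    -- φ commutes with take
    have htake : ∀ w ∈ funTree f, ∀ j ≤ w.length, φ (w.take j) = (φ w).take j := by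
      intro w hw j hj
      have := hiter w hw (w.length - j)
      rw [dropLast_iterate, dropLast_iterate, hlen w hw,
        show w.length - (w.length - j) = j by omega] at this
      exact this
    -- φ fixes 1^x
    have hones : ∀ x, φ (oz x 0) = oz x 0 := by
      intro x
      have hex : ∃ N, x ≤ N ∧ ∀ y, y < x → y + g y < N := by
        refine ⟨x + 1 + (Finset.range x).sup (fun y => y + g y), by omega, ?_⟩
        intro y hy
        have h2 := Finset.le_sup (f := fun y => y + g y) (Finset.mem_range.mpr hy)
        omega
      obtain ⟨N, hxN, hbound⟩ := hex
      have hmemN : oz N 0 ∈ funTree f := oz_mem (Nat.zero_le _)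
      obtain ⟨y, m, hm, him⟩ := hbij.mapsTo hmemN
      rw [oz_def] at him
      have hlN : y + m = N := by
        have := hlen _ hmemN
        rw [him, oz_length, oz_length] at this; omega
      have hyx : x ≤ y := by
        by_contra hyx
        push_neg at hyx
        have := hbound y hyx
        omega
      have := htake _ hmemN x (by rw [oz_length]; omega)
      rw [him, take_oz_le hyx, take_oz_le hxN] at this
      exact this
    have hfg : ∀ x, f x = g x := by
      intro x
      refine le_antisymm ?_ ?_
      · -- f x ≤ g x
        have hw : oz x (f x) ∈ funTree f := oz_mem le_rfl
        obtain ⟨y, m, hm, him⟩ := hbij.mapsTo hw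
        rw [oz_def] at him
        have hl : y + m = x + f x := by
          have := hlen _ hw
          rw [him, oz_length, oz_length] at this; omega
        have htx := htake _ hw x (by rw [oz_length]; omega)
        rw [him, take_oz_le (le_refl x), hones] at htx
        have hxy : x ≤ y := by
          by_contra hxy
          push_neg at hxy
          rw [take_oz_ge hxy.le (by omega)] at htx
          have := (oz_inj htx.symm).1
          omega
        have hyx : y ≤ x := by
          by_contra hyx
          push_neg at hyx
          have hty := htake _ hw y (by rw [oz_length]; omega)
          rw [him, take_oz_le (le_refl y), take_oz_ge hxy (by omega)] at hty
          have hm1 : oz x (y - x) ∈ funTree f := oz_mem (by omega)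
          have hm2 : oz y 0 ∈ funTree f := oz_mem (Nat.zero_le _)
          have heq := hbij.injOn hm1 hm2 (by rw [hty, hones])
          have := (oz_inj heq).1
          omega
        have hxy' : y = x := le_antisymm hyx hxy
        subst hxy'
        omega
      · -- g x ≤ f x
        have hw' : oz x (g x) ∈ funTree g := oz_mem le_rfl
        obtain ⟨w, hwT, hww⟩ := hbij.surjOn hw'
        obtain ⟨X, M, hM, rfl⟩ := hwT
        rw [oz_def] at hww
        have hwT : oz X M ∈ funTree f := oz_mem hM
        have hl : X + M = x + g x := by
          have := hlen _ hwT
          rw [hww, oz_length, oz_length] at this; omega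
        have htx := htake _ hwT x (by rw [oz_length]; omega)
        rw [hww, take_oz_le (le_refl x)] at htx
        have hxX : x ≤ X := by
          by_contra hxX
          push_neg at hxX
          rw [take_oz_ge hxX.le (by omega)] at htx
          have hm1 : oz X (x - X) ∈ funTree f := oz_mem (by omega)
          have heq := hbij.injOn hm1 (oz_mem (f := f) (x := x) (m := 0) (Nat.zero_le _))
            (by rw [htx, hones])
          have := (oz_inj heq).1
          omega
        have hXx : X ≤ x := by
          by_contra hXx
          push_neg at hXx
          have htX := htake _ hwT X (by rw [oz_length]; omega)
          rw [hww, take_oz_le (le_refl X), hones, take_oz_ge hxX (by omega)] at htX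
          have := (oz_inj htX).1
          omega
        have hXx' : X = x := le_antisymm hXx hxX
        subst hXx'
        omega
    exact funext hfg
  · rintro rfl
    exact ⟨id, Set.bijOn_id _, fun w _ => rfl⟩
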